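/- For p ≥ 0, ∑_{n=1}^∞ ( ∑_{j=1}^{n} (j+r)_{p,λ} ) x^n/n! = e^x ∑_{k=1}^{p+1} ( {p+1+r brace k+r}_{r,λ} + (pλ - r) {p+r brace k+r}_{r,λ} ) x^k/k. -/

import Mathlib

open Finset


-- shift lemma
lemma ff_shift (y : ℝ) (k : ℕ) :
    ∏ i ∈ range (k+1), (y + 1 - i) =
      ∏ i ∈ range (k+1), (y - i) + (k+1) * ∏ i ∈ range k, (y - i) := by
  rw [Finset.prod_range_succ' (fun i => y + 1 - (i : ℕ)), Finset.prod_range_succ]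
  have : ∀ i ∈ range k, y + 1 - ((i:ℕ) + 1 : ℕ) = y - i := by
    intro i _; push_cast; ring
  rw [Finset.prod_congr rfl this]
  push_cast; ring

lemma fact_prod (k : ℕ) : ∏ i ∈ range k, ((k:ℝ) - i) = k.factorial := by
  have h1 : ∀ i ∈ range k, ((k:ℝ) - i) = ((k - i : ℕ) : ℝ) := by
    intro i hi
    have : i ≤ k := le_of_lt (mem_range.mp hi)
    push_cast [Nat.cast_sub this]; ring
  rw [Finset.prod_congr rfl h1, ← Nat.cast_prod]
  congr 1
  have := Finset.prod_range_reflect (fun j => j + 1) k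
  rw [← Finset.prod_range_add_one_eq_factorial k, ← this]
  apply Finset.prod_congr rfl
  intro j hj
  have : j < k := mem_range.mp hj
  omega

lemma indep (N : ℕ) (c : ℕ → ℝ)
    (h : ∀ x : ℝ, ∑ k ∈ range N, c k * ∏ i ∈ range k, (x - i) = 0) :
    ∀ k, k < N → c k = 0 := by
  intro k
  induction k using Nat.strong_induction_on with
  | _ k ih =>
    intro hk
    have h1 := h k
    have h2 : ∑ m ∈ range N, c m * ∏ i ∈ range m, ((k:ℝ) - i) = c k * k.factorial := by
      rw [Finset.sum_eq_single k]
      · rw [fact_prod]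
      · intro m hm hne
        rcases lt_or_gt_of_ne hne with hlt | hgt
        · rw [ih m hlt (lt_trans hlt hk)]; ring
        · have : (k:ℕ) ∈ range m := mem_range.mpr hgt
          rw [Finset.prod_eq_zero this (by simp)]; ring
      · intro hkN; exact absurd (mem_range.mpr hk) hkN
    rw [h1] at h2
    have : (k.factorial : ℝ) ≠ 0 := Nat.cast_ne_zero.mpr k.factorial_ne_zero
    exact (mul_eq_zero.mp h2.symm).resolve_right this

lemma P_aux (x : ℝ) (k : ℕ) :
    Summable (fun n : ℕ => (∏ i ∈ range k, ((n:ℝ) - i)) * x ^ n / n.factorial) ∧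
      ∑' n : ℕ, (∏ i ∈ range k, ((n:ℝ) - i)) * x ^ n / n.factorial
        = x ^ k * Real.exp x := by
  induction k with
  | zero =>
    constructor
    · simpa using Real.summable_pow_div_factorial x
    · simp only [range_zero, Finset.prod_empty, one_mul, pow_zero]
      rw [Real.exp_eq_exp_ℝ, NormedSpace.exp_eq_tsum_div]
  | succ k ih =>
    set f : ℕ → ℝ := fun n => (∏ i ∈ range (k+1), ((n:ℝ) - i)) * x ^ n / n.factorial with hf
    have h0 : f 0 = 0 := by
      show (∏ i ∈ range (k+1), (((0:ℕ):ℝ) - i)) * x ^ 0 / (Nat.factorial 0) = 0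
      rw [Finset.prod_eq_zero (mem_range.mpr (Nat.succ_pos k)) (by norm_num)]
      simp
    have hstep : ∀ n : ℕ, f (n+1) =
        x * ((∏ i ∈ range k, ((n:ℝ) - i)) * x ^ n / n.factorial) := by
      intro n
      have hp : ∏ i ∈ range (k+1), (((n:ℕ)+1:ℝ) - i)
          = ((n:ℝ)+1) * ∏ i ∈ range k, ((n:ℝ) - i) := by
        rw [Finset.prod_range_succ' (fun i => ((n:ℝ)+1 - (i:ℕ)))]
        have : ∀ i ∈ range k, (n:ℝ) + 1 - ((i:ℕ) + 1 : ℕ) = (n:ℝ) - i := by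
          intro i _; push_cast; ring
        rw [Finset.prod_congr rfl this]
        push_cast; ring
      have hfac : ((n+1).factorial : ℝ) = ((n:ℝ)+1) * n.factorial := by
        rw [Nat.factorial_succ]; push_cast; ring
      have hne : ((n:ℝ)+1) ≠ 0 := by positivity
      have hne2 : (n.factorial : ℝ) ≠ 0 := Nat.cast_ne_zero.mpr n.factorial_ne_zero
      simp only [hf]
      push_cast [hp, hfac]
      field_simp
      ring
    have hsum : Summable f := by
      rw [← summable_nat_add_iff 1]
      simp only [hstep]
      exact (ih.1.mul_left x)
    refine ⟨hsum, ?_⟩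
    rw [Summable.tsum_eq_zero_add hsum, h0, zero_add]
    simp only [hstep]
    rw [tsum_mul_left, ih.2]
    ring

lemma tele (k n : ℕ) :
    ∑ j ∈ Finset.Icc 1 n, ∏ i ∈ range k, ((j:ℝ) - i)
      = (∏ i ∈ range (k+1), (((n:ℝ)+1) - i) - ∏ i ∈ range (k+1), ((1:ℝ) - i)) / (k+1) := by
  induction n with
  | zero => simp
  | succ n ihn =>
    rw [Finset.sum_Icc_succ_top (by omega), ihn]
    have hs := ff_shift ((n:ℝ)+1) k
    have hne : ((k:ℝ)+1) ≠ 0 := by positivity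
    have hc : ∀ i ∈ range k, (((n+1:ℕ)):ℝ) - (i:ℕ) = ((n:ℝ)+1) - i := by
      intro i _; push_cast; ring
    rw [Finset.prod_congr rfl hc]

    push_cast at hs
    field_simp
    push_cast; linarith [hs]

lemma icc_reindex (f : ℕ → ℝ) (n : ℕ) :
    ∑ k ∈ Finset.Icc 1 n, f k = ∑ i ∈ range n, f (i+1) := by
  induction n with
  | zero => simp
  | succ n ihn =>
    rw [Finset.sum_Icc_succ_top (by omega), ihn, Finset.sum_range_succ]

/-- Generalized falling factorial `(y)_{m,λ} = y(y-λ)⋯(y-(m-1)λ)`. -/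
noncomputable def degFallFact (y l : ℝ) (m : ℕ) : ℝ :=
  ∏ i ∈ Finset.range m, (y - i * l)

lemma Srec (l : ℝ) (p r : ℕ) (S : ℕ → ℕ → ℝ)
    (hS : ∀ (m : ℕ) (x : ℝ), degFallFact (x + r) l m =
      ∑ k ∈ Finset.range (m + 1), S m k * ∏ i ∈ Finset.range k, (x - i))
    (hS0 : ∀ m k : ℕ, m < k → S m k = 0) :
    ∀ k, 1 ≤ k → k ≤ p + 1 →
      S (p+1) k = S p (k-1) + ((k:ℝ) + r - p * l) * S p k := by
  set c : ℕ → ℝ := fun k =>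
    S (p+1) k - ((if k = 0 then 0 else S p (k-1)) + ((k:ℝ) + r - p * l) * S p k) with hc
  have key : ∀ x : ℝ, ∑ k ∈ range (p+2), c k * ∏ i ∈ range k, (x - i) = 0 := by
    intro x
    have h1 := hS (p+1) x
    have h2 := hS p x
    have hsplit : degFallFact (x + r) l (p+1)
        = degFallFact (x + r) l p * (x + r - p * l) := by
      simp only [degFallFact, Finset.prod_range_succ]
    rw [hsplit, h2] at h1
    -- RHS: ∑ k ∈ range (p+1), S p k * FF k * (x + r - p l)
    have expand : (∑ k ∈ range (p+1), S p k * ∏ i ∈ range k, (x - i)) * (x + r - p*l)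
        = ∑ k ∈ range (p+2),
            ((if k = 0 then 0 else S p (k-1)) + ((k:ℝ) + r - p * l) * S p k)
              * ∏ i ∈ range k, (x - i) := by
      rw [Finset.sum_mul]
      have hterm : ∀ k ∈ range (p+1),
          (S p k * ∏ i ∈ range k, (x - i)) * (x + r - p*l)
            = S p k * ∏ i ∈ range (k+1), (x - i)
              + ((k:ℝ) + r - p * l) * S p k * ∏ i ∈ range k, (x - i) := by
        intro k _
        rw [Finset.prod_range_succ]
        ring
      rw [Finset.sum_congr rfl hterm, Finset.sum_add_distrib]
      have e1 : ∑ k ∈ range (p+1), S p k * ∏ i ∈ range (k+1), (x - i)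
          = ∑ k ∈ range (p+2), (if k = 0 then 0 else S p (k-1)) * ∏ i ∈ range k, (x - i) := by
        rw [Finset.sum_range_succ' (fun k => (if k = 0 then 0 else S p (k-1)) * ∏ i ∈ range k, (x - i)) (p+1)]
        simp
      have e2 : ∑ k ∈ range (p+2), ((k:ℝ) + r - p * l) * S p k * ∏ i ∈ range k, (x - i)
          = ∑ k ∈ range (p+1), ((k:ℝ) + r - p * l) * S p k * ∏ i ∈ range k, (x - i) := by
        rw [Finset.sum_range_succ, hS0 p (p+1) (by omega)]
        ring
      rw [e1, ← e2, ← Finset.sum_add_distrib]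
      exact Finset.sum_congr rfl (fun k _ => by ring)
    rw [expand] at h1
    simp only [hc]
    rw [Finset.sum_congr rfl (fun k _ => by ring :
      ∀ k ∈ range (p+2),
        (S (p+1) k - ((if k = 0 then 0 else S p (k-1)) + ((k:ℝ) + r - p * l) * S p k))
            * ∏ i ∈ range k, (x - i)
          = S (p+1) k * ∏ i ∈ range k, (x - i)
            - ((if k = 0 then 0 else S p (k-1)) + ((k:ℝ) + r - p * l) * S p k)
                * ∏ i ∈ range k, (x - i)), Finset.sum_sub_distrib, ← h1]
    ring
  intro k hk1 hk2
  have := indep (p+2) c key k (by omega)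
  simp only [hc] at this
  rw [if_neg (by omega)] at this
  linarith

lemma ff_one (k : ℕ) : ∏ i ∈ range (k+1), ((1:ℝ) - i) = if k = 0 then 1 else 0 := by
  cases k with
  | zero => simp
  | succ k =>
    rw [if_neg (Nat.succ_ne_zero k)]
    exact Finset.prod_eq_zero (mem_range.mpr (show 1 < k+1+1 by omega)) (by norm_num)

/-- `∑_{n≥1} (∑_{j=1}^n (j+r)_{p,λ}) x^n/n!
  = e^x ∑_{k=1}^{p+1} ({p+1+r brace k+r}_{r,λ} + (pλ - r){p+r brace k+r}_{r,λ}) x^k/k`,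
with the convention `{p+r brace k+r}_{r,λ} = 0` for `k > p`. -/
theorem tsum_shifted_partial_sums (l : ℝ) (p r : ℕ) (S : ℕ → ℕ → ℝ)
    (hS : ∀ (m : ℕ) (x : ℝ), degFallFact (x + r) l m =
      ∑ k ∈ Finset.range (m + 1), S m k * ∏ i ∈ Finset.range k, (x - i))
    (hS0 : ∀ m k : ℕ, m < k → S m k = 0)
    (x : ℝ) :
    ∑' n : ℕ, (∑ j ∈ Finset.Icc 1 n, degFallFact (j + r) l p) * x ^ n / n.factorial =
      Real.exp x * ∑ k ∈ Finset.Icc 1 (p + 1),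
        (S (p + 1) k + ((p : ℝ) * l - r) * S p k) * x ^ k / k := by
  set E := Real.exp x with hE
  have hexp : ∑' n : ℕ, x ^ n / (n.factorial : ℝ) = E := by
    rw [hE, Real.exp_eq_exp_ℝ, NormedSpace.exp_eq_tsum_div]
  -- pointwise rewrite of the summand
  have hA : ∀ n : ℕ, (∑ j ∈ Finset.Icc 1 n, degFallFact (j + r) l p) * x ^ n / n.factorial
      = ∑ k ∈ range (p+1), (S p k / ((k:ℝ)+1)) *
          ((∏ i ∈ range (k+1), ((n:ℝ) - i)) * x ^ n / n.factorial
            + ((k:ℝ)+1) * ((∏ i ∈ range k, ((n:ℝ) - i)) * x ^ n / n.factorial)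
            - (∏ i ∈ range (k+1), ((1:ℝ) - i)) * (x ^ n / n.factorial)) := by
    intro n
    have hdeg : (∑ j ∈ Finset.Icc 1 n, degFallFact (j + r) l p)
        = ∑ k ∈ range (p+1), S p k * ∑ j ∈ Finset.Icc 1 n, ∏ i ∈ range k, ((j:ℝ) - i) := by
      have step1 : ∀ j ∈ Finset.Icc 1 n, degFallFact ((j:ℝ) + r) l p
          = ∑ k ∈ range (p+1), S p k * ∏ i ∈ range k, ((j:ℝ) - i) := fun j _ => hS p j
      rw [Finset.sum_congr rfl step1, Finset.sum_comm]
      exact Finset.sum_congr rfl (fun k _ => (Finset.mul_sum _ _ _).symm)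
    rw [hdeg, Finset.sum_mul, Finset.sum_div]
    refine Finset.sum_congr rfl (fun k _ => ?_)
    rw [tele k n, ff_shift (n:ℝ) k]
    have hne : ((k:ℝ)+1) ≠ 0 := by positivity
    have hf : ((n.factorial:ℝ)) ≠ 0 := Nat.cast_ne_zero.mpr n.factorial_ne_zero
    field_simp
  rw [tsum_congr hA]
  -- summability of each piece
  have hsummand : ∀ k ∈ range (p+1), Summable (fun n : ℕ => (S p k / ((k:ℝ)+1)) *
          ((∏ i ∈ range (k+1), ((n:ℝ) - i)) * x ^ n / n.factorial
            + ((k:ℝ)+1) * ((∏ i ∈ range k, ((n:ℝ) - i)) * x ^ n / n.factorial)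
            - (∏ i ∈ range (k+1), ((1:ℝ) - i)) * (x ^ n / n.factorial))) := by
    intro k _
    exact ((((P_aux x (k+1)).1.add ((P_aux x k).1.mul_left _)).sub
      ((Real.summable_pow_div_factorial x).mul_left _)).mul_left _)
  rw [Summable.tsum_finsetSum hsummand]
  have hval : ∀ k ∈ range (p+1), ∑' n : ℕ, (S p k / ((k:ℝ)+1)) *
          ((∏ i ∈ range (k+1), ((n:ℝ) - i)) * x ^ n / n.factorial
            + ((k:ℝ)+1) * ((∏ i ∈ range k, ((n:ℝ) - i)) * x ^ n / n.factorial)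
            - (∏ i ∈ range (k+1), ((1:ℝ) - i)) * (x ^ n / n.factorial))
      = (S p k / ((k:ℝ)+1)) * (x^(k+1)*E + ((k:ℝ)+1)*(x^k*E)
          - (∏ i ∈ range (k+1), ((1:ℝ) - i)) * E) := by
    intro k _
    rw [tsum_mul_left]
    congr 1
    rw [Summable.tsum_sub ((P_aux x (k+1)).1.add ((P_aux x k).1.mul_left _))
        ((Real.summable_pow_div_factorial x).mul_left _),
      Summable.tsum_add (P_aux x (k+1)).1 ((P_aux x k).1.mul_left _),
      tsum_mul_left, tsum_mul_left, (P_aux x (k+1)).2, (P_aux x k).2, hexp]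
  rw [Finset.sum_congr rfl hval]
  -- simplify left side termwise
  have hL : ∀ k ∈ range (p+1), (S p k / ((k:ℝ)+1)) * (x^(k+1)*E + ((k:ℝ)+1)*(x^k*E)
          - (∏ i ∈ range (k+1), ((1:ℝ) - i)) * E)
      = S p k * x^(k+1)/((k:ℝ)+1) * E + S p k * x^k * E
          - (if k = 0 then S p 0 * E else 0) := by
    intro k _
    rw [ff_one]
    rcases Nat.eq_zero_or_pos k with h0 | hpos
    · subst h0; norm_num; ring
    · rw [if_neg (by omega), if_neg (by omega)]
      have hne : ((k:ℝ)+1) ≠ 0 := by positivity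
      field_simp
      ring
  rw [Finset.sum_congr rfl hL, Finset.sum_sub_distrib, Finset.sum_add_distrib,
    Finset.sum_ite_eq' (range (p+1)) 0 (fun _ => S p 0 * E),
    if_pos (mem_range.mpr (Nat.succ_pos p))]
  -- rewrite right side
  have hrec := Srec l p r S hS hS0
  rw [icc_reindex (fun k => (S (p + 1) k + ((p : ℝ) * l - r) * S p k) * x ^ k / k) (p+1)]
  have hR : ∀ i ∈ range (p+1),
      (S (p+1) (i+1) + ((p:ℝ)*l - r) * S p (i+1)) * x^(i+1) / ((i+1:ℕ):ℝ)
        = S p i * x^(i+1)/((i:ℝ)+1) + S p (i+1) * x^(i+1) := by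
    intro i hi
    have hip : i < p + 1 := mem_range.mp hi
    rw [hrec (i+1) (by omega) (by omega)]
    have h1 : ((i+1:ℕ):ℝ) = (i:ℝ)+1 := by push_cast; ring
    have hne : ((i:ℝ)+1) ≠ 0 := by positivity
    simp only [Nat.add_sub_cancel, h1]

    field_simp
    ring
  rw [Finset.sum_congr rfl hR, Finset.mul_sum]
  have hkey : ∑ k ∈ range (p+1), S p k * x^k * E - S p 0 * E
      = ∑ i ∈ range (p+1), E * (S p (i+1) * x^(i+1)) := by
    have h1 := Finset.sum_range_succ' (fun j => E * (S p j * x^j)) (p+1)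
    have h2 := Finset.sum_range_succ (fun j => E * (S p j * x^j)) (p+1)
    rw [hS0 p (p+1) (by omega)] at h2
    have h3 : ∑ k ∈ range (p+1), S p k * x^k * E
        = ∑ j ∈ range (p+1), E * (S p j * x^j) :=
      Finset.sum_congr rfl (fun k _ => by ring)
    simp only [pow_zero, mul_one, mul_zero, zero_mul, add_zero] at h1 h2
    rw [h3]
    linarith [h1, h2]
  have hkey2 : ∑ k ∈ range (p+1), S p k * x^(k+1)/((k:ℝ)+1) * E
      = ∑ i ∈ range (p+1), E * (S p i * x^(i+1)/((i:ℝ)+1)) :=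
    Finset.sum_congr rfl (fun k _ => by ring)
  have hsplit2 : ∑ i ∈ range (p+1), E * (S p i * x^(i+1)/((i:ℝ)+1) + S p (i+1) * x^(i+1))
      = ∑ i ∈ range (p+1), E * (S p i * x^(i+1)/((i:ℝ)+1))
        + ∑ i ∈ range (p+1), E * (S p (i+1) * x^(i+1)) := by
    rw [← Finset.sum_add_distrib]
    exact Finset.sum_congr rfl (fun i _ => mul_add E _ _)
  rw [hsplit2]
  have hkey2' : ∑ i ∈ range (p+1), E * (S p i * x^(i+1)/((i:ℝ)+1))
      = ∑ k ∈ range (p+1), S p k * x^(k+1)/((k:ℝ)+1) * E :=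
    Finset.sum_congr rfl (fun k _ => by ring)
  linarith [hkey, hkey2']
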